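/- (Error bound on boundary states.) Fix N ≥ 2 and a real ε with 0 ≤ ε ≤ ½. Then for every triple (p, p̃, (i, j)) in the perturbed-pair family 𝒫(ε), the errors at the two boundary states satisfy |p̃ i − p i| ≤ 2ε and |p̃ j − p j| ≤ 2ε. -/
import Mathlib


noncomputable section

/-- Series composition: distribution of `min` of two independent states. -/
def smin {N : ℕ} (p q : Fin N → ℝ) : Fin N → ℝ :=
  fun k => ∑ i, ∑ j, if min i j = k then p i * q j else 0

/-- Parallel composition: distribution of `max` of two independent states. -/
def smax {N : ℕ} (p q : Fin N → ℝ) : Fin N → ℝ :=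
  fun k => ∑ i, ∑ j, if max i j = k then p i * q j else 0

/-- The point mass at state `s`. -/
def delta {N : ℕ} (s : Fin N) : Fin N → ℝ := fun i => if i = s then 1 else 0

/-- The vector with value `a` at state `0`, `b` at state `N-1`, `0` elsewhere
(i.e. `a·δ₀ + b·δ_{N-1}` for `N ≥ 2`). -/
def endSwitch (N : ℕ) (a b : ℝ) : Fin N → ℝ :=
  fun i => (if (i : ℕ) = 0 then a else 0) + (if (i : ℕ) = N - 1 then b else 0)

/-- The perturbed-pair family `𝒫(ε)`: triples `(p, p̃, (i, j))`, where `p` is the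
ideal distribution built by the binary `N`-state construction on states
`i, …, j` and `p̃` is the distribution of the same circuit in which each
½-pswitch `½·δ₀ + ½·δ_{N-1}` is perturbed to `(½+ε̂)·δ₀ + (½-ε̂)·δ_{N-1}` with
`|ε̂| ≤ ε`. -/
inductive Pert (N : ℕ) (ε : ℝ) :
    (Fin N → ℝ) → (Fin N → ℝ) → Fin N → Fin N → Prop
  | point (s : Fin N) : Pert N ε (delta s) (delta s) s s
  | step {p p' u u' : Fin N → ℝ} {i k j : Fin N} {ε' : ℝ} :
      Pert N ε p p' i k → Pert N ε u u' k j →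
      (∀ t, p t ≠ 0 → i ≤ t ∧ t ≤ k) → (∀ t, p' t ≠ 0 → i ≤ t ∧ t ≤ k) →
      (∀ t, u t ≠ 0 → k ≤ t ∧ t ≤ j) → (∀ t, u' t ≠ 0 → k ≤ t ∧ t ≤ j) →
      |ε'| ≤ ε →
      Pert N ε (smax p (smin (endSwitch N (1 / 2) (1 / 2)) u))
        (smax p' (smin (endSwitch N (1 / 2 + ε') (1 / 2 - ε')) u')) i j

lemma sum_smin {N : ℕ} (p q : Fin N → ℝ) :
    ∑ k, smin p q k = (∑ i, p i) * (∑ j, q j) := by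
  unfold smin
  calc ∑ k, ∑ i, ∑ j, (if min i j = k then p i * q j else 0)
      = ∑ i, ∑ j, ∑ k, (if min i j = k then p i * q j else 0) := by
        rw [Finset.sum_comm]; refine Finset.sum_congr rfl fun i _ => ?_
        rw [Finset.sum_comm]
    _ = ∑ i, ∑ j, p i * q j := by simp [Finset.sum_ite_eq]
    _ = (∑ i, p i) * (∑ j, q j) := by rw [Finset.sum_mul_sum]

lemma sum_smax {N : ℕ} (p q : Fin N → ℝ) :
    ∑ k, smax p q k = (∑ i, p i) * (∑ j, q j) := by
  unfold smax
  calc ∑ k, ∑ i, ∑ j, (if max i j = k then p i * q j else 0)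
      = ∑ i, ∑ j, ∑ k, (if max i j = k then p i * q j else 0) := by
        rw [Finset.sum_comm]; refine Finset.sum_congr rfl fun i _ => ?_
        rw [Finset.sum_comm]
    _ = ∑ i, ∑ j, p i * q j := by simp [Finset.sum_ite_eq]
    _ = (∑ i, p i) * (∑ j, q j) := by rw [Finset.sum_mul_sum]

lemma smin_nonneg {N : ℕ} {p q : Fin N → ℝ} (hp : ∀ t, 0 ≤ p t) (hq : ∀ t, 0 ≤ q t)
    (t : Fin N) : 0 ≤ smin p q t := by
  refine Finset.sum_nonneg fun i _ => Finset.sum_nonneg fun j _ => ?_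
  split
  · exact mul_nonneg (hp i) (hq j)
  · exact le_refl 0

lemma smax_nonneg {N : ℕ} {p q : Fin N → ℝ} (hp : ∀ t, 0 ≤ p t) (hq : ∀ t, 0 ≤ q t)
    (t : Fin N) : 0 ≤ smax p q t := by
  refine Finset.sum_nonneg fun i _ => Finset.sum_nonneg fun j _ => ?_
  split
  · exact mul_nonneg (hp i) (hq j)
  · exact le_refl 0

lemma sum_endSwitch {N : ℕ} (hN : 2 ≤ N) (a b : ℝ) :
    ∑ i, endSwitch N a b i = a + b := by
  unfold endSwitch
  rw [Finset.sum_add_distrib]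
  congr 1
  · rw [Finset.sum_eq_single_of_mem (⟨0, by omega⟩ : Fin N) (Finset.mem_univ _)]
    · simp
    · intro t _ ht; rw [if_neg]; intro h; exact ht (Fin.ext h)
  · rw [Finset.sum_eq_single_of_mem (⟨N - 1, by omega⟩ : Fin N) (Finset.mem_univ _)]
    · simp
    · intro t _ ht; rw [if_neg]; intro h; exact ht (Fin.ext h)

lemma endSwitch_nonneg {N : ℕ} {a b : ℝ} (ha : 0 ≤ a) (hb : 0 ≤ b) (t : Fin N) :
    0 ≤ endSwitch N a b t := by
  unfold endSwitch
  apply add_nonneg <;> split <;> first | assumption | exact le_refl 0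

lemma smax_apply {N : ℕ} (p v : Fin N → ℝ) (t : Fin N) :
    smax p v t = p t * ∑ s ∈ Finset.Iic t, v s + v t * ∑ s ∈ Finset.Iio t, p s := by
  have key : ∀ i j : Fin N, (if max i j = t then p i * v j else 0)
      = (if i = t ∧ j ≤ t then p i * v j else 0) + (if i < t ∧ j = t then p i * v j else 0) := by
    intro i j
    rcases lt_trichotomy i t with hi | hi | hi
    · rcases lt_trichotomy j t with hj | hj | hj
      · rw [if_neg (max_lt hi hj).ne, if_neg (fun h => absurd h.1 hi.ne),
          if_neg (fun h => absurd h.2 hj.ne)]; ring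
      · rw [if_pos (by rw [hj]; exact max_eq_right hi.le), if_neg (fun h => absurd h.1 hi.ne),
          if_pos ⟨hi, hj⟩]; ring
      · rw [if_neg (lt_max_iff.mpr (Or.inr hj)).ne', if_neg (fun h => absurd h.2 hj.not_ge),
          if_neg (fun h => absurd h.2 hj.ne')]; ring
    · rcases lt_trichotomy j t with hj | hj | hj
      · rw [if_pos (by rw [hi]; exact max_eq_left hj.le), if_pos ⟨hi, hj.le⟩,
          if_neg (fun h => absurd h.1 (by rw [hi]; exact lt_irrefl t))]; ring
      · rw [if_pos (by rw [hi, hj]; exact max_self t), if_pos ⟨hi, hj.le⟩,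
          if_neg (fun h => absurd h.1 (by rw [hi]; exact lt_irrefl t))]; ring
      · rw [if_neg (lt_max_iff.mpr (Or.inr hj)).ne', if_neg (fun h => absurd h.2 hj.not_ge),
          if_neg (fun h => absurd h.2 hj.ne')]; ring
    · rw [if_neg (lt_max_iff.mpr (Or.inl hi)).ne', if_neg (fun h => absurd h.1 hi.ne'),
        if_neg (fun h => absurd h.1 (lt_asymm hi))]; ring
  unfold smax
  simp only [key, Finset.sum_add_distrib]
  congr 1
  · have : ∀ i : Fin N, (∑ j, if i = t ∧ j ≤ t then p i * v j else 0)
        = if i = t then ∑ j, (if j ≤ t then p i * v j else 0) else 0 := by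
      intro i
      by_cases hi : i = t
      · simp [hi]
      · simp [hi]
    rw [Finset.sum_congr rfl fun i _ => this i, Finset.sum_ite_eq' Finset.univ t]
    simp only [Finset.mem_univ, if_true]
    rw [← Finset.sum_filter, Finset.mul_sum]
    refine Finset.sum_congr ?_ fun _ _ => rfl
    ext s; simp
  · have : ∀ i : Fin N, (∑ j, if i < t ∧ j = t then p i * v j else 0)
        = if i < t then p i * v t else 0 := by
      intro i
      by_cases hi : i < t
      · simp [hi, Finset.sum_ite_eq' Finset.univ t]
      · simp [hi]
    rw [Finset.sum_congr rfl fun i _ => this i, ← Finset.sum_filter]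
    rw [show Finset.filter (· < t) Finset.univ = Finset.Iio t by ext s; simp]
    rw [Finset.mul_sum]
    exact Finset.sum_congr rfl fun s _ => mul_comm _ _

lemma smin_endSwitch {N : ℕ} (hN : 2 ≤ N) (a b : ℝ) (u : Fin N → ℝ) (t : Fin N) :
    smin (endSwitch N a b) u t
      = b * u t + (if (t : ℕ) = 0 then a * ∑ s, u s else 0) := by
  set z : Fin N := ⟨0, by omega⟩ with hz
  set L : Fin N := ⟨N - 1, by omega⟩ with hL
  have hzbot : ∀ j : Fin N, z ≤ j := fun j => by simp [hz, Fin.le_def]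
  have hLtop : ∀ j : Fin N, j ≤ L := fun j => by
    simp only [hL, Fin.le_def]; omega
  have hes : ∀ i : Fin N, endSwitch N a b i
      = (if i = z then a else 0) + (if i = L then b else 0) := by
    intro i
    simp only [endSwitch, Fin.ext_iff, hz, hL]
  unfold smin
  have split : ∀ i j : Fin N, (if min i j = t then endSwitch N a b i * u j else 0)
      = (if min i j = t then (if i = z then a else 0) * u j else 0)
        + (if min i j = t then (if i = L then b else 0) * u j else 0) := by
    intro i j
    rw [hes]
    split <;> ring
  simp only [split, Finset.sum_add_distrib]
  have h1 : (∑ i, ∑ j, if min i j = t then (if i = z then a else 0) * u j else 0)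
      = if (t : ℕ) = 0 then a * ∑ s, u s else 0 := by
    rw [Finset.sum_eq_single z]
    · have : ∀ j, min z j = z := fun j => min_eq_left (hzbot j)
      simp only [this, if_pos rfl]
      have hcond : (z = t) ↔ ((t : ℕ) = 0) := by
        rw [Fin.ext_iff]; simp [hz, eq_comm]
      by_cases ht : (t : ℕ) = 0
      · rw [if_pos ht]
        simp [hcond.mpr ht, Finset.mul_sum]
      · rw [if_neg ht]
        have hnz : ¬ z = t := fun h => ht (hcond.mp h)
        simp [hnz]
    · intro i _ hi
      refine Finset.sum_eq_zero fun j _ => ?_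
      rw [if_neg hi]
      split <;> ring
    · intro h; exact absurd (Finset.mem_univ z) h
  have h2 : (∑ i, ∑ j, if min i j = t then (if i = L then b else 0) * u j else 0)
      = b * u t := by
    rw [Finset.sum_eq_single L]
    · have : ∀ j, min L j = j := fun j => min_eq_right (hLtop j)
      simp only [this, if_pos rfl]
      simp [Finset.sum_ite_eq' Finset.univ t]
    · intro i _ hi
      refine Finset.sum_eq_zero fun j _ => ?_
      rw [if_neg hi]
      split <;> ring
    · intro h; exact absurd (Finset.mem_univ L) h
  rw [h1, h2]; ring

lemma sum_Iic_ind0 {N : ℕ} (hN : 2 ≤ N) (i : Fin N) (c : ℝ) :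
    ∑ s ∈ Finset.Iic i, (if (s : ℕ) = 0 then c else 0) = c := by
  have hz : (⟨0, by omega⟩ : Fin N) ∈ Finset.Iic i := by
    simp [Fin.le_def]
  rw [Finset.sum_eq_single_of_mem (⟨0, by omega⟩ : Fin N) hz]
  · simp
  · intro t _ ht
    rw [if_neg]; intro h; exact ht (Fin.ext h)

lemma sum_Iic_smin_endSwitch {N : ℕ} (hN : 2 ≤ N) (a b : ℝ) (u : Fin N → ℝ) (i : Fin N) :
    ∑ s ∈ Finset.Iic i, smin (endSwitch N a b) u s
      = b * (∑ s ∈ Finset.Iic i, u s) + a * ∑ s, u s := by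
  have : ∀ s ∈ Finset.Iic i, smin (endSwitch N a b) u s
      = b * u s + (if (s : ℕ) = 0 then a * ∑ x, u x else 0) :=
    fun s _ => smin_endSwitch hN a b u s
  rw [Finset.sum_congr rfl this, Finset.sum_add_distrib, ← Finset.mul_sum,
    sum_Iic_ind0 hN]

lemma sum_Iic_full {N : ℕ} {p : Fin N → ℝ} {j : Fin N} (h : ∀ t, p t ≠ 0 → t ≤ j) :
    ∑ s ∈ Finset.Iic j, p s = ∑ s, p s := by
  refine Finset.sum_subset (Finset.subset_univ _) fun x _ hx => ?_
  by_contra hne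
  exact hx (Finset.mem_Iic.mpr (h x hne))

lemma Pert.sum_one {N : ℕ} {ε : ℝ} {p p' : Fin N → ℝ} {i j : Fin N}
    (hN : 2 ≤ N) (h : Pert N ε p p' i j) : (∑ s, p s) = 1 ∧ (∑ s, p' s) = 1 := by
  induction h with
  | point s => constructor <;> simp [delta]
  | step hp hu sp sp' su su' he ihp ihu =>
    constructor <;> rw [sum_smax, sum_smin, sum_endSwitch hN]
    · rw [ihp.1, ihu.1]; ring
    · rw [ihp.2, ihu.2]; ring

lemma Pert.nonneg {N : ℕ} {ε : ℝ} {p p' : Fin N → ℝ} {i j : Fin N}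
    (hε0 : 0 ≤ ε) (hε : ε ≤ 1 / 2) (h : Pert N ε p p' i j) :
    (∀ t, 0 ≤ p t) ∧ (∀ t, 0 ≤ p' t) := by
  induction h with
  | point s =>
    constructor <;> intro t <;> unfold delta <;> split <;> norm_num
  | step hp hu sp sp' su su' he ihp ihu =>
    obtain ⟨he1, he2⟩ := abs_le.mp he
    constructor <;> intro t
    · exact smax_nonneg ihp.1
        (smin_nonneg (endSwitch_nonneg (by norm_num) (by norm_num)) ihu.1) t
    · exact smax_nonneg ihp.2
        (smin_nonneg (endSwitch_nonneg (by linarith) (by linarith)) ihu.2) t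

lemma le_one_of {N : ℕ} {p : Fin N → ℝ} (hnn : ∀ t, 0 ≤ p t) (hsum : ∑ s, p s = 1)
    (t : Fin N) : p t ≤ 1 :=
  hsum ▸ Finset.single_le_sum (fun s _ => hnn s) (Finset.mem_univ t)

lemma pert_bound {ε ε' x y : ℝ} (hx : |x| ≤ 2 * ε) (hy : |y| ≤ 1) (he : |ε'| ≤ ε) :
    |x / 2 + ε' * y| ≤ 2 * ε := by
  have h1 : |x / 2 + ε' * y| ≤ |x| / 2 + |ε'| * |y| := by
    calc |x / 2 + ε' * y| ≤ |x / 2| + |ε' * y| := abs_add_le _ _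
      _ = |x| / 2 + |ε'| * |y| := by rw [abs_div, abs_two, abs_mul]
  have h2 : |ε'| * |y| ≤ ε * 1 :=
    mul_le_mul he hy (abs_nonneg y) (le_trans (abs_nonneg ε') he)
  linarith

/-- Error bound on boundary states: for every `(p, p̃, (i, j))` in `𝒫(ε)`, the
errors at the boundary states `i` and `j` are at most `2ε`. -/
theorem boundary_error (N : ℕ) (hN : 2 ≤ N) (ε : ℝ) (hε0 : 0 ≤ ε) (hε : ε ≤ 1 / 2)
    (p p' : Fin N → ℝ) (i j : Fin N) (h : Pert N ε p p' i j) :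
    |p' i - p i| ≤ 2 * ε ∧ |p' j - p j| ≤ 2 * ε := by
  induction h with
  | point s =>
    constructor <;> · rw [sub_self, abs_zero]; linarith
  | step hp hu sp sp' su su' he ihp ihu =>
    rename_i pp pp' uu uu' ii kk jj ε'
    -- basic facts
    have hups := Pert.sum_one hN hp
    have huus := Pert.sum_one hN hu
    have hupn := Pert.nonneg hε0 hε hp
    have huun := Pert.nonneg hε0 hε hu
    have hik : ii ≤ kk := by
      obtain ⟨t, ht⟩ : ∃ t, pp t ≠ 0 := by
        by_contra hc; push_neg at hc
        have h0 : ∑ s, pp s = 0 := Finset.sum_eq_zero fun s _ => hc s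
        rw [hups.1] at h0; norm_num at h0
      exact le_trans (sp t ht).1 (sp t ht).2
    have hkj : kk ≤ jj := by
      obtain ⟨t, ht⟩ : ∃ t, uu t ≠ 0 := by
        by_contra hc; push_neg at hc
        have h0 : ∑ s, uu s = 0 := Finset.sum_eq_zero fun s _ => hc s
        rw [huus.1] at h0; norm_num at h0
      exact le_trans (su t ht).1 (su t ht).2
    constructor
    · -- left boundary
      have hIio : ∑ s ∈ Finset.Iio ii, pp s = 0 := Finset.sum_eq_zero fun s hs => by
        by_contra hne
        exact absurd (sp s hne).1 (Finset.mem_Iio.mp hs).not_ge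
      have hIio' : ∑ s ∈ Finset.Iio ii, pp' s = 0 := Finset.sum_eq_zero fun s hs => by
        by_contra hne
        exact absurd (sp' s hne).1 (Finset.mem_Iio.mp hs).not_ge
      have hQi : smax pp (smin (endSwitch N (1 / 2) (1 / 2)) uu) ii
          = pp ii * (1 / 2 * (∑ s ∈ Finset.Iic ii, uu s) + 1 / 2) := by
        rw [smax_apply, hIio, mul_zero, add_zero, sum_Iic_smin_endSwitch hN, huus.1, mul_one]
      have hQi' : smax pp' (smin (endSwitch N (1 / 2 + ε') (1 / 2 - ε')) uu') ii
          = pp' ii * ((1 / 2 - ε') * (∑ s ∈ Finset.Iic ii, uu' s) + (1 / 2 + ε')) := by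
        rw [smax_apply, hIio', mul_zero, add_zero, sum_Iic_smin_endSwitch hN, huus.2, mul_one]
      rcases eq_or_lt_of_le hik with heq | hlt
      · subst heq
        have hsingle : ∀ (q : Fin N → ℝ), (∀ t, q t ≠ 0 → ii ≤ t ∧ t ≤ ii) →
            (∑ s, q s) = q ii := by
          intro q hq
          refine Finset.sum_eq_single_of_mem ii (Finset.mem_univ _) fun t _ htne => ?_
          by_contra hne
          exact htne (le_antisymm (hq t hne).2 (hq t hne).1)
        have hppi : pp ii = 1 := (hsingle pp sp).symm.trans hups.1
        have hppi' : pp' ii = 1 := (hsingle pp' sp').symm.trans hups.2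
        have hSi : ∑ s ∈ Finset.Iic ii, uu s = uu ii := by
          rw [← Finset.Iio_insert, Finset.sum_insert (by simp)]
          rw [Finset.sum_eq_zero, add_zero]
          intro s hs; by_contra hne
          exact absurd (su s hne).1 (Finset.mem_Iio.mp hs).not_ge
        have hSi' : ∑ s ∈ Finset.Iic ii, uu' s = uu' ii := by
          rw [← Finset.Iio_insert, Finset.sum_insert (by simp)]
          rw [Finset.sum_eq_zero, add_zero]
          intro s hs; by_contra hne
          exact absurd (su' s hne).1 (Finset.mem_Iio.mp hs).not_ge
        rw [hQi, hQi', hppi, hppi', hSi, hSi', one_mul, one_mul]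
        have hrw : (1 / 2 - ε') * uu' ii + (1 / 2 + ε') - (1 / 2 * uu ii + 1 / 2)
            = (uu' ii - uu ii) / 2 + ε' * (1 - uu' ii) := by ring
        rw [hrw]
        refine pert_bound ihu.1 (abs_le.mpr ⟨?_, ?_⟩) he
        · have := le_one_of huun.2 huus.2 ii; linarith
        · have := huun.2 ii; linarith
      · have hSi : ∑ s ∈ Finset.Iic ii, uu s = 0 := Finset.sum_eq_zero fun s hs => by
          by_contra hne
          exact absurd (su s hne).1 (lt_of_le_of_lt (Finset.mem_Iic.mp hs) hlt).not_ge
        have hSi' : ∑ s ∈ Finset.Iic ii, uu' s = 0 := Finset.sum_eq_zero fun s hs => by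
          by_contra hne
          exact absurd (su' s hne).1 (lt_of_le_of_lt (Finset.mem_Iic.mp hs) hlt).not_ge
        rw [hQi, hQi', hSi, hSi', mul_zero, zero_add, mul_zero, zero_add]
        have hrw : pp' ii * (1 / 2 + ε') - pp ii * (1 / 2)
            = (pp' ii - pp ii) / 2 + ε' * pp' ii := by ring
        rw [hrw]
        refine pert_bound ihp.1 (abs_le.mpr ⟨?_, ?_⟩) he
        · have := hupn.2 ii; linarith
        · exact le_one_of hupn.2 hups.2 ii
    · -- right boundary
      have hIicp : ∑ s ∈ Finset.Iic jj, pp s = 1 :=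
        (sum_Iic_full fun t ht => le_trans (sp t ht).2 hkj).trans hups.1
      have hIicp' : ∑ s ∈ Finset.Iic jj, pp' s = 1 :=
        (sum_Iic_full fun t ht => le_trans (sp' t ht).2 hkj).trans hups.2
      have hIiop : ∑ s ∈ Finset.Iio jj, pp s = 1 - pp jj := by
        rw [← Finset.Iio_insert, Finset.sum_insert (by simp)] at hIicp; linarith
      have hIiop' : ∑ s ∈ Finset.Iio jj, pp' s = 1 - pp' jj := by
        rw [← Finset.Iio_insert, Finset.sum_insert (by simp)] at hIicp'; linarith
      have hIicu : ∑ s ∈ Finset.Iic jj, uu s = 1 :=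
        (sum_Iic_full fun t ht => (su t ht).2).trans huus.1
      have hIicu' : ∑ s ∈ Finset.Iic jj, uu' s = 1 :=
        (sum_Iic_full fun t ht => (su' t ht).2).trans huus.2
      have hQj : smax pp (smin (endSwitch N (1 / 2) (1 / 2)) uu) jj
          = pp jj + smin (endSwitch N (1 / 2) (1 / 2)) uu jj * (1 - pp jj) := by
        rw [smax_apply, sum_Iic_smin_endSwitch hN, huus.1, hIicu, hIiop]
        ring
      have hQj' : smax pp' (smin (endSwitch N (1 / 2 + ε') (1 / 2 - ε')) uu') jj
          = pp' jj + smin (endSwitch N (1 / 2 + ε') (1 / 2 - ε')) uu' jj * (1 - pp' jj) := by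
        rw [smax_apply, sum_Iic_smin_endSwitch hN, huus.2, hIicu', hIiop']
        ring
      rw [hQj, hQj', smin_endSwitch hN, smin_endSwitch hN, huus.1, huus.2, mul_one, mul_one]
      rcases eq_or_lt_of_le hkj with heq | hlt
      · subst heq
        have hsingle : ∀ (q : Fin N → ℝ), (∀ t, q t ≠ 0 → kk ≤ t ∧ t ≤ kk) →
            (∑ s, q s) = q kk := by
          intro q hq
          refine Finset.sum_eq_single_of_mem kk (Finset.mem_univ _) fun t _ htne => ?_
          by_contra hne
          exact htne (le_antisymm (hq t hne).2 (hq t hne).1)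
        have huuj : uu kk = 1 := (hsingle uu su).symm.trans huus.1
        have huuj' : uu' kk = 1 := (hsingle uu' su').symm.trans huus.2
        rw [huuj, huuj']
        by_cases hz : (kk : ℕ) = 0
        · rw [if_pos hz, if_pos hz]
          have hrw : pp' kk + ((1 / 2 - ε') * 1 + (1 / 2 + ε')) * (1 - pp' kk)
              - (pp kk + (1 / 2 * 1 + 1 / 2) * (1 - pp kk)) = 0 := by ring
          rw [hrw, abs_zero]; linarith
        · rw [if_neg hz, if_neg hz]
          have hrw : pp' kk + ((1 / 2 - ε') * 1 + 0) * (1 - pp' kk)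
              - (pp kk + (1 / 2 * 1 + 0) * (1 - pp kk))
              = (pp' kk - pp kk) / 2 + ε' * (pp' kk - 1) := by ring
          rw [hrw]
          refine pert_bound ihp.2 (abs_le.mpr ⟨?_, ?_⟩) he
          · have := hupn.2 kk; linarith
          · have := le_one_of hupn.2 hups.2 kk; linarith
      · have hppj : pp jj = 0 := by
          by_contra hne; exact absurd (sp jj hne).2 hlt.not_ge
        have hppj' : pp' jj = 0 := by
          by_contra hne; exact absurd (sp' jj hne).2 hlt.not_ge
        have hz : ¬ (jj : ℕ) = 0 := by
          have := Fin.lt_def.mp hlt; omega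
        rw [if_neg hz, if_neg hz, hppj, hppj']
        have hrw : 0 + ((1 / 2 - ε') * uu' jj + 0) * (1 - 0)
            - (0 + (1 / 2 * uu jj + 0) * (1 - 0))
            = (uu' jj - uu jj) / 2 + ε' * (-(uu' jj)) := by ring
        rw [hrw]
        refine pert_bound ihu.2 (abs_le.mpr ⟨?_, ?_⟩) he
        · have := le_one_of huun.2 huus.2 jj; linarith
        · have := huun.2 jj; linarith
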